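/- Let R be a finite graded poset of rank n with 0̂ and 1̂, let 1 ≤ i ≤ n−1, and let R[i] be the stretching of R at rank i: for each element t of R of rank i adjoin a new element t′ > t with t′ < u whenever t < u in R (and no other relations not implied by these), so R[i] has rank n+1. For S ⊆ [n], define S° as follows: if not both i and i+1 lie in S, replace each j ∈ S with j ≥ i+1 by j−1; if both i and i+1 lie in S, remove i+1 and replace each j ∈ S with j > i+1 by j−1. Then β_{R[i]}(S) = β_R(S°) if not both i, i+1 ∈ S, and β_{R[i]}(S) = −β_R(S°) if both i, i+1 ∈ S. Consequently, if β_R is multiplicity-free then so is β_{R[i]}. -/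

import Mathlib

/-- The flag f-vector: `flagF P ρ S` is the number of chains of `P` whose set of
ranks (values of `ρ`) is exactly `S`. -/
noncomputable def flagF (P : Type*) [PartialOrder P] (ρ : P → ℕ) (S : Finset ℕ) : ℕ :=
  Set.ncard {C : Finset P | IsChain (· ≤ ·) (C : Set P) ∧ C.image ρ = S}

/-- The flag h-vector: `flagH P ρ S = ∑_{T ⊆ S} (-1)^{#(S∖T)} flagF P ρ T`. -/
noncomputable def flagH (P : Type*) [PartialOrder P] (ρ : P → ℕ) (S : Finset ℕ) : ℤ :=
  ∑ T ∈ S.powerset, (-1 : ℤ) ^ (S.card - T.card) * (flagF P ρ T : ℤ)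

/-- The operation `S ↦ S°` of the stretching construction: if not both `i` and
`i+1` lie in `S`, replace every `j ∈ S` with `j ≥ i+1` by `j-1`; if both do,
remove `i+1` and replace every `j ∈ S` with `j > i+1` by `j-1`. -/
def contractAt (i : ℕ) (S : Finset ℕ) : Finset ℕ :=
  if i ∈ S ∧ i + 1 ∈ S then
    (S.erase (i + 1)).image (fun j => if i + 1 < j then j - 1 else j)
  else
    S.image (fun j => if i + 1 ≤ j then j - 1 else j)

namespace Stmt18Aux

/-- The contraction map on ranks. -/
def sig (i j : ℕ) : ℕ := if i + 1 ≤ j then j - 1 else j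

lemma sig_eq_iff {i a b : ℕ} (h : sig i a = sig i b) :
    a = b ∨ (a = i ∧ b = i + 1) ∨ (a = i + 1 ∧ b = i) := by
  unfold sig at h; split_ifs at h <;> omega

lemma sig_self (i : ℕ) : sig i i = i := by unfold sig; split_ifs <;> omega

lemma sig_succ (i : ℕ) : sig i (i + 1) = i := by unfold sig; split_ifs <;> omega

lemma contract_eq_image (i : ℕ) (S : Finset ℕ) :
    contractAt i S = S.image (sig i) := by
  classical
  unfold contractAt
  split_ifs with h
  · obtain ⟨h1, h2⟩ := h
    ext j
    simp only [Finset.mem_image, Finset.mem_erase]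
    constructor
    · rintro ⟨k, ⟨hk1, hk2⟩, rfl⟩
      exact ⟨k, hk2, by unfold sig; split_ifs <;> omega⟩
    · rintro ⟨k, hk, rfl⟩
      by_cases hk1 : k = i + 1
      · subst hk1
        exact ⟨i, ⟨by omega, h1⟩, by rw [sig_succ]; split_ifs <;> omega⟩
      · exact ⟨k, ⟨hk1, hk⟩, by unfold sig; split_ifs <;> omega⟩
  · rfl

/-- Reindexing a sum over the powerset of an image. -/
lemma sum_powerset_image {f : ℕ → ℕ} {s : Finset ℕ}
    (hinj : ∀ a ∈ s, ∀ b ∈ s, f a = f b → a = b) (G : Finset ℕ → ℤ) :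
    ∑ T ∈ (s.image f).powerset, G T = ∑ B ∈ s.powerset, G (B.image f) := by
  classical
  have key1 : ∀ T ∈ (s.image f).powerset,
      (s.filter (fun a => f a ∈ T)).image f = T := by
    intro T hT
    rw [Finset.mem_powerset] at hT
    ext y
    simp only [Finset.mem_image, Finset.mem_filter]
    constructor
    · rintro ⟨a, ⟨_, ha⟩, rfl⟩; exact ha
    · intro hy
      obtain ⟨a, ha, rfl⟩ := Finset.mem_image.1 (hT hy)
      exact ⟨a, ⟨ha, hy⟩, rfl⟩
  have key2 : ∀ B ∈ s.powerset, s.filter (fun a => f a ∈ B.image f) = B := by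
    intro B hB
    rw [Finset.mem_powerset] at hB
    ext a
    simp only [Finset.mem_filter, Finset.mem_image]
    constructor
    · rintro ⟨ha, b, hb, hfb⟩
      rwa [hinj b (hB hb) a ha hfb] at hb
    · intro ha; exact ⟨hB ha, a, ha, rfl⟩
  refine Finset.sum_bij' (fun T _ => s.filter (fun a => f a ∈ T))
    (fun B _ => B.image f)
    (fun T _ => Finset.mem_powerset.2 (Finset.filter_subset _ _))
    (fun B hB => Finset.mem_powerset.2
      (Finset.image_subset_image (Finset.mem_powerset.1 hB)))
    (fun T hT => key1 T hT) (fun B hB => key2 B hB)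
    (fun T hT => by rw [key1 T hT])

lemma card_image_of_injOn' {f : ℕ → ℕ} {s : Finset ℕ}
    (hinj : ∀ a ∈ s, ∀ b ∈ s, f a = f b → a = b) :
    (s.image f).card = s.card :=
  Finset.card_image_of_injOn (fun a ha b hb h => hinj a ha b hb h)

lemma sum_contract_not_both (α : Finset ℕ → ℤ) (i : ℕ) (S : Finset ℕ)
    (h : ¬(i ∈ S ∧ i + 1 ∈ S)) :
    ∑ T ∈ S.powerset, (-1 : ℤ) ^ (S.card - T.card) * α (T.image (sig i)) =
    ∑ T ∈ (S.image (sig i)).powerset,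
      (-1 : ℤ) ^ ((S.image (sig i)).card - T.card) * α T := by
  classical
  have hinj : ∀ a ∈ S, ∀ b ∈ S, sig i a = sig i b → a = b := by
    intro a ha b hb hab
    rcases sig_eq_iff hab with h1 | ⟨h1, h2⟩ | ⟨h1, h2⟩
    · exact h1
    · exact absurd ⟨h1 ▸ ha, h2 ▸ hb⟩ h
    · exact absurd ⟨h2 ▸ hb, h1 ▸ ha⟩ h
  rw [sum_powerset_image hinj
    (fun T => (-1 : ℤ) ^ ((S.image (sig i)).card - T.card) * α T)]
  refine Finset.sum_congr rfl fun B hB => ?_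
  have hBs := Finset.mem_powerset.1 hB
  have hc1 : (S.image (sig i)).card = S.card := card_image_of_injOn' hinj
  have hc2 : (B.image (sig i)).card = B.card :=
    card_image_of_injOn' (fun a ha b hb => hinj a (hBs ha) b (hBs hb))
  rw [hc1, hc2]

lemma sum_contract_both (α : Finset ℕ → ℤ) (i : ℕ) (S : Finset ℕ)
    (hiS : i ∈ S) (hi1S : i + 1 ∈ S) :
    ∑ T ∈ S.powerset, (-1 : ℤ) ^ (S.card - T.card) * α (T.image (sig i)) =
    - ∑ T ∈ (S.image (sig i)).powerset,
      (-1 : ℤ) ^ ((S.image (sig i)).card - T.card) * α T := by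
  classical
  set S₀ := (S.erase (i + 1)).erase i with hS₀def
  have hiS₀ : i ∉ S₀ := by simp [hS₀def]
  have hi1S₀ : i + 1 ∉ S₀ := by simp [hS₀def]
  have hSeq : S = insert i (insert (i + 1) S₀) := by
    ext j
    simp only [hS₀def, Finset.mem_insert, Finset.mem_erase]
    constructor
    · intro hj
      by_cases h1 : j = i
      · exact Or.inl h1
      · by_cases h2 : j = i + 1
        · exact Or.inr (Or.inl h2)
        · exact Or.inr (Or.inr ⟨h1, h2, hj⟩)
    · rintro (rfl | rfl | ⟨-, -, hj⟩)
      · exact hiS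
      · exact hi1S
      · exact hj
  have hii : i ∉ insert (i + 1) S₀ := by
    simp only [Finset.mem_insert]
    push_neg
    exact ⟨by omega, hiS₀⟩
  have hm : S.card = S₀.card + 2 := by
    rw [hSeq, Finset.card_insert_of_notMem hii,
      Finset.card_insert_of_notMem hi1S₀]
  have hinj0 : ∀ a ∈ S₀, ∀ b ∈ S₀, sig i a = sig i b → a = b := by
    intro a ha b hb hab
    rcases sig_eq_iff hab with h1 | ⟨h1, h2⟩ | ⟨h1, h2⟩
    · exact h1
    · exact absurd (h1 ▸ ha) hiS₀
    · exact absurd (h1 ▸ ha) hi1S₀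
  have hiim : i ∉ S₀.image (sig i) := by
    intro hmem
    obtain ⟨k, hk, hks⟩ := Finset.mem_image.1 hmem
    have : sig i k = sig i i := by rw [hks, sig_self]
    rcases sig_eq_iff this with h1 | ⟨h1, h2⟩ | ⟨h1, h2⟩
    · exact hiS₀ (h1 ▸ hk)
    · exact hiS₀ (h1 ▸ hk)
    · exact hi1S₀ (h1 ▸ hk)
  have hcimg : (S₀.image (sig i)).card = S₀.card := card_image_of_injOn' hinj0
  have himg : S.image (sig i) = insert i (S₀.image (sig i)) := by
    rw [hSeq, Finset.image_insert, Finset.image_insert, sig_self, sig_succ,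
      Finset.insert_idem]
  have hcard2 : (S.image (sig i)).card = S₀.card + 1 := by
    rw [himg, Finset.card_insert_of_notMem hiim, hcimg]
  -- rewrite the RHS
  rw [hm, hcard2, himg, Finset.sum_powerset_insert hiim,
    sum_powerset_image hinj0
      (fun T => (-1 : ℤ) ^ (S₀.card + 1 - T.card) * α T),
    sum_powerset_image hinj0
      (fun T => (-1 : ℤ) ^ (S₀.card + 1 - (insert i T).card) * α (insert i T))]
  -- rewrite the LHS
  conv_lhs => rw [hSeq]
  rw [Finset.sum_powerset_insert hii, Finset.sum_powerset_insert hi1S₀,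
    Finset.sum_powerset_insert hi1S₀]
  rw [← Finset.sum_add_distrib, ← Finset.sum_add_distrib,
    ← Finset.sum_add_distrib, ← Finset.sum_add_distrib, ← Finset.sum_neg_distrib]
  refine Finset.sum_congr rfl fun B hB => ?_
  have hBs := Finset.mem_powerset.1 hB
  have hiB : i ∉ B := fun h => hiS₀ (hBs h)
  have hi1B : i + 1 ∉ B := fun h => hi1S₀ (hBs h)
  have hd : B.card ≤ S₀.card := Finset.card_le_card hBs
  have hcB : (B.image (sig i)).card = B.card :=
    card_image_of_injOn' (fun a ha b hb => hinj0 a (hBs ha) b (hBs hb))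
  have hiBim : i ∉ B.image (sig i) := fun h => hiim (Finset.image_subset_image hBs h)
  have img1 : (insert (i + 1) B).image (sig i) = insert i (B.image (sig i)) := by
    rw [Finset.image_insert, sig_succ]
  have img2 : (insert i B).image (sig i) = insert i (B.image (sig i)) := by
    rw [Finset.image_insert, sig_self]
  have img3 : (insert i (insert (i + 1) B)).image (sig i)
      = insert i (B.image (sig i)) := by
    rw [Finset.image_insert, Finset.image_insert, sig_self, sig_succ,
      Finset.insert_idem]
  have hii1B : i ∉ insert (i + 1) B := by
    simp only [Finset.mem_insert]
    push_neg
    exact ⟨by omega, hiB⟩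
  rw [img1, img2, img3,
    Finset.card_insert_of_notMem hi1B, Finset.card_insert_of_notMem hiB,
    Finset.card_insert_of_notMem hii1B, Finset.card_insert_of_notMem hi1B,
    Finset.card_insert_of_notMem hiBim, hcB]
  have e0 : S₀.card + 2 - B.card = (S₀.card - B.card) + 2 := by omega
  have e1 : S₀.card + 2 - (B.card + 1) = (S₀.card - B.card) + 1 := by omega
  have e2 : S₀.card + 2 - (B.card + 1 + 1) = S₀.card - B.card := by omega
  have e3 : S₀.card + 1 - B.card = (S₀.card - B.card) + 1 := by omega
  have e4 : S₀.card + 1 - (B.card + 1) = S₀.card - B.card := by omega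
  rw [e0, e1, e2, e3, e4]
  ring

lemma mono_of_cov (R : Type*) [Fintype R] [PartialOrder R] (ρ : R → ℕ)
    (hcov : ∀ a b : R, a ⋖ b → ρ b = ρ a + 1) :
    ∀ a b : R, a < b → ρ a < ρ b := by
  classical
  suffices h : ∀ (N : ℕ) (a b : R),
      (Finset.univ.filter (fun x => a < x ∧ x ≤ b)).card ≤ N → a < b → ρ a < ρ b by
    intro a b hab
    exact h _ a b le_rfl hab
  intro N
  induction N with
  | zero =>
    intro a b hcard hab
    have hb : b ∈ Finset.univ.filter (fun x => a < x ∧ x ≤ b) := by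
      simp [hab]
    have := Finset.card_pos.2 ⟨b, hb⟩
    omega
  | succ N ih =>
    intro a b hcard hab
    obtain ⟨c, hc, hmin⟩ := Finset.exists_minimal
      (s := Finset.univ.filter (fun x => a < x ∧ x ≤ b)) ⟨b, by simp [hab]⟩
    simp only [Finset.mem_filter, Finset.mem_univ, true_and] at hc
    have hac : a ⋖ c := by
      refine ⟨hc.1, fun d had hdc => hdc.not_ge (hmin ?_ hdc.le)⟩
      simp only [Finset.mem_filter, Finset.mem_univ, true_and]
      exact ⟨had, hdc.le.trans hc.2⟩
    have hrc : ρ c = ρ a + 1 := hcov a c hac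
    rcases eq_or_lt_of_le hc.2 with rfl | hcb
    · omega
    · have hsub : Finset.univ.filter (fun x => c < x ∧ x ≤ b) ⊆
          (Finset.univ.filter (fun x => a < x ∧ x ≤ b)).erase c := by
        intro x hx
        simp only [Finset.mem_filter, Finset.mem_univ, true_and,
          Finset.mem_erase] at hx ⊢
        exact ⟨(ne_of_gt hx.1), hc.1.trans hx.1, hx.2⟩
      have hcmem : c ∈ Finset.univ.filter (fun x => a < x ∧ x ≤ b) := by
        simp only [Finset.mem_filter, Finset.mem_univ, true_and]
        exact hc
      have hle : (Finset.univ.filter (fun x => c < x ∧ x ≤ b)).card ≤ N := by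
        have h1 := Finset.card_le_card hsub
        have h2 := Finset.card_erase_of_mem hcmem
        have h3 := Finset.card_pos.2 ⟨c, hcmem⟩
        omega
      have := ih c b hle hcb
      omega

lemma flagF_stretch (R : Type*) [PartialOrder R] (ρ : R → ℕ)
    (hmono : ∀ a b : R, a < b → ρ a < ρ b)
    (i : ℕ) (R' : Type*) [PartialOrder R'] (ρ' : R' → ℕ)
    (e : R ⊕ {t : R // ρ t = i} ≃ R')
    (hle₁ : ∀ a b : R, e (Sum.inl a) ≤ e (Sum.inl b) ↔ a ≤ b)
    (hle₂ : ∀ (a : R) (t : {t : R // ρ t = i}),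
      e (Sum.inl a) ≤ e (Sum.inr t) ↔ a ≤ t.1)
    (hle₃ : ∀ (t : {t : R // ρ t = i}) (a : R),
      e (Sum.inr t) ≤ e (Sum.inl a) ↔ t.1 < a)
    (hle₄ : ∀ t s : {t : R // ρ t = i}, e (Sum.inr t) ≤ e (Sum.inr s) ↔ t = s)
    (hρ'₁ : ∀ a : R, ρ' (e (Sum.inl a)) = if ρ a ≤ i then ρ a else ρ a + 1)
    (hρ'₂ : ∀ t : {t : R // ρ t = i}, ρ' (e (Sum.inr t)) = i + 1)
    (T : Finset ℕ) :
    flagF R' ρ' T = flagF R ρ (contractAt i T) := by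
  classical
  rw [contract_eq_image]
  set f : R' → R := fun x => Sum.elim id Subtype.val (e.symm x) with hf
  set g : R → R' := fun a => e (Sum.inl a) with hg
  have hfl : ∀ a : R, f (g a) = a := fun a => by simp [hf, hg]
  have hfr : ∀ t, f (e (Sum.inr t)) = t.1 := fun t => by simp [hf]
  have hmle : ∀ a b : R, a ≤ b → ρ a ≤ ρ b := by
    intro a b hab
    rcases eq_or_lt_of_le hab with rfl | h
    · exact le_rfl
    · exact (hmono _ _ h).le
  have hcase : ∀ x : R', (∃ a : R, x = g a) ∨ ∃ t, x = e (Sum.inr t) := by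
    intro x
    rcases h : e.symm x with a | t
    · refine Or.inl ⟨a, ?_⟩
      show x = e (Sum.inl a)
      rw [← h, Equiv.apply_symm_apply]
    · exact Or.inr ⟨t, by rw [← h, Equiv.apply_symm_apply]⟩
  have hfmono : ∀ x y : R', x ≤ y → f x ≤ f y := by
    intro x y hxy
    rcases hcase x with ⟨a, rfl⟩ | ⟨t, rfl⟩ <;> rcases hcase y with ⟨b, rfl⟩ | ⟨s, rfl⟩
    · rw [hfl, hfl]; exact (hle₁ a b).1 hxy
    · rw [hfl, hfr]; exact (hle₂ a s).1 hxy
    · rw [hfr, hfl]; exact ((hle₃ t b).1 hxy).le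
    · rw [hfr, hfr]; exact le_of_eq (congrArg Subtype.val ((hle₄ t s).1 hxy))
  have hrk : ∀ x : R', ρ (f x) = sig i (ρ' x) := by
    intro x
    rcases hcase x with ⟨a, rfl⟩ | ⟨t, rfl⟩
    · rw [hfl, hρ'₁]; unfold sig; split_ifs <;> omega
    · rw [hfr, hρ'₂, sig_succ, t.2]
  have hmono' : ∀ x y : R', x < y → ρ' x < ρ' y := by
    intro x y hxy
    rcases hcase x with ⟨a, rfl⟩ | ⟨t, rfl⟩ <;> rcases hcase y with ⟨b, rfl⟩ | ⟨s, rfl⟩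
    · have hab : a < b := by
        refine lt_of_le_of_ne ((hle₁ a b).1 hxy.le) fun h => hxy.ne ?_
        rw [h]
      have := hmono a b hab
      rw [hg, hρ'₁, hρ'₁]; split_ifs <;> omega
    · have h2 : ρ a ≤ i := by
        have h1 := (hle₂ a s).1 hxy.le
        have := hmle a s.1 h1
        rwa [s.2] at this
      rw [hg, hρ'₁, hρ'₂]; split_ifs <;> omega
    · have h1 := (hle₃ t b).1 hxy.le
      have h2 := hmono t.1 b h1
      rw [t.2] at h2
      rw [hg, hρ'₂, hρ'₁]; split_ifs <;> omega
    · exact absurd (by rw [(hle₄ t s).1 hxy.le]) hxy.ne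
  have huniq : ∀ (C : Finset R'), IsChain (· ≤ ·) (C : Set R') →
      ∀ x ∈ C, ∀ y ∈ C, ρ' x = ρ' y → x = y := by
    intro C hC x hx y hy hxy
    by_contra hne
    rcases hC (Finset.mem_coe.2 hx) (Finset.mem_coe.2 hy) hne with h | h
    · exact absurd hxy (ne_of_lt (hmono' x y (lt_of_le_of_ne h hne)))
    · exact absurd hxy.symm (ne_of_lt (hmono' y x (lt_of_le_of_ne h (Ne.symm hne))))
  have huniqR : ∀ (D : Finset R), IsChain (· ≤ ·) (D : Set R) →
      ∀ x ∈ D, ∀ y ∈ D, ρ x = ρ y → x = y := by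
    intro D hD x hx y hy hxy
    by_contra hne
    rcases hD (Finset.mem_coe.2 hx) (Finset.mem_coe.2 hy) hne with h | h
    · exact absurd hxy (ne_of_lt (hmono x y (lt_of_le_of_ne h hne)))
    · exact absurd hxy.symm (ne_of_lt (hmono y x (lt_of_le_of_ne h (Ne.symm hne))))
  have hnew : ∀ x : R', ρ' x = i + 1 → ∃ t, x = e (Sum.inr t) := by
    intro x h
    rcases hcase x with ⟨a, rfl⟩ | h'
    · rw [hg, hρ'₁] at h; split_ifs at h <;> omega
    · exact h'
  have hglρ : ∀ a : R, ρ' (g a) = if ρ a ≤ i then ρ a else ρ a + 1 := fun a => hρ'₁ a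
  -- value lemma for the inverse direction
  have hsu : ∀ j, j ≠ i + 1 →
      (if sig i j ≤ i then sig i j else sig i j + 1) = j := by
    intro j hj; unfold sig; split_ifs <;> omega
  have himfg : ∀ E : Finset R, (E.image g).image f = E := by
    intro E
    ext a
    simp only [Finset.mem_image]
    constructor
    · rintro ⟨x, ⟨b, hb, rfl⟩, rfl⟩
      rwa [hfl]
    · intro ha
      exact ⟨g a, ⟨a, ha, rfl⟩, hfl a⟩
  have himsu : ∀ U : Finset ℕ, i + 1 ∉ U →
      (U.image (sig i)).image (fun j => if j ≤ i then j else j + 1) = U := by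
    intro U hU
    ext j
    simp only [Finset.mem_image]
    constructor
    · rintro ⟨k, ⟨l, hl, rfl⟩, rfl⟩
      rwa [hsu l (by rintro rfl; exact hU hl)]
    · intro hj
      exact ⟨sig i j, ⟨j, hj, rfl⟩, hsu j (by rintro rfl; exact hU hj)⟩
  have hbij : Set.BijOn (fun C : Finset R' => C.image f)
      {C : Finset R' | IsChain (· ≤ ·) (C : Set R') ∧ C.image ρ' = T}
      {D : Finset R | IsChain (· ≤ ·) (D : Set R) ∧ D.image ρ = T.image (sig i)} := by
    constructor
    · -- MapsTo
      rintro C ⟨hchain, himg⟩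
      constructor
      · rw [Finset.coe_image]
        exact hchain.image_of_map_rel _ _ f (fun x y h => hfmono x y h)
      · rw [Finset.image_image, ← himg, Finset.image_image]
        exact Finset.image_congr (fun x _ => hrk x)
    constructor
    · -- InjOn
      have hkey : ∀ C₁ C₂ : Finset R',
          (IsChain (· ≤ ·) (C₁ : Set R') ∧ C₁.image ρ' = T) →
          (IsChain (· ≤ ·) (C₂ : Set R') ∧ C₂.image ρ' = T) →
          C₁.image f = C₂.image f → C₁ ⊆ C₂ := by
        rintro C₁ C₂ ⟨hch1, him1⟩ ⟨hch2, him2⟩ himg x hx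
        have hfx : f x ∈ C₂.image f := by
          rw [← himg]; exact Finset.mem_image_of_mem f hx
        obtain ⟨y, hy, hyx⟩ := Finset.mem_image.1 hfx
        rcases hcase x with ⟨a, rfl⟩ | ⟨t, rfl⟩ <;>
          rcases hcase y with ⟨b, hb⟩ | ⟨s, hs⟩
        · subst hb
          rw [hfl, hfl] at hyx
          rwa [← hyx]
        · -- x = g a old of rank i, y new
          subst hs
          rw [hfr, hfl] at hyx
          have hρa : ρ a = i := by rw [← hyx]; exact s.2
          have hiT : i ∈ T := by
            rw [← him1]
            refine Finset.mem_image.2 ⟨g a, hx, ?_⟩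
            rw [hglρ, if_pos (le_of_eq hρa), hρa]
          rw [← him2] at hiT
          obtain ⟨z, hz, hzr⟩ := Finset.mem_image.1 hiT
          rcases hcase z with ⟨b, rfl⟩ | ⟨u, rfl⟩
          · have hρb : ρ b = i := by
              rw [hglρ] at hzr; split_ifs at hzr <;> omega
            have hzy : (g b : R') ≠ e (Sum.inr s) := by
              intro h
              have := congrArg ρ' h
              rw [hglρ, hρ'₂, if_pos (le_of_eq hρb)] at this
              omega
            rcases hch2 (Finset.mem_coe.2 hz) (Finset.mem_coe.2 hy) hzy with h | h
            · have hble := (hle₂ b s).1 h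
              have : b = s.1 := by
                rcases eq_or_lt_of_le hble with h' | h'
                · exact h'
                · have := hmono _ _ h'
                  rw [hρb, s.2] at this
                  omega
              have hba : b = a := this.trans hyx
              exact hba ▸ hz
            · have := (hle₃ s b).1 h
              have := hmono _ _ this
              rw [s.2, hρb] at this
              omega
          · rw [hρ'₂] at hzr; omega
        · -- x new, y = g b old
          subst hb
          rw [hfl, hfr] at hyx
          have hρb : ρ b = i := by rw [hyx]; exact t.2
          have hi1T : i + 1 ∈ T := by
            rw [← him1]
            exact Finset.mem_image.2 ⟨e (Sum.inr t), hx, hρ'₂ t⟩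
          rw [← him2] at hi1T
          obtain ⟨w, hw, hwr⟩ := Finset.mem_image.1 hi1T
          obtain ⟨u, rfl⟩ := hnew w hwr
          have hwy : (e (Sum.inr u) : R') ≠ g b := by
            intro h
            have := congrArg ρ' h
            rw [hρ'₂, hglρ, if_pos (le_of_eq hρb)] at this
            omega
          rcases hch2 (Finset.mem_coe.2 hw) (Finset.mem_coe.2 hy) hwy with h | h
          · have := (hle₃ u b).1 h
            have := hmono _ _ this
            rw [u.2, hρb] at this
            omega
          · have hble := (hle₂ b u).1 h
            have hbu : b = u.1 := by
              rcases eq_or_lt_of_le hble with h' | h'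
              · exact h'
              · have := hmono _ _ h'
                rw [hρb, u.2] at this
                omega
            have : u = t := Subtype.ext (by rw [← hbu, hyx])
            rwa [← this]
        · subst hs
          rw [hfr, hfr] at hyx
          have : s = t := Subtype.ext hyx
          rwa [← this]
      intro C₁ h1 C₂ h2 heq
      exact Finset.Subset.antisymm (hkey C₁ C₂ h1 h2 heq) (hkey C₂ C₁ h2 h1 heq.symm)
    · -- SurjOn
      rintro D ⟨hchD, himD⟩
      by_cases hT1 : i + 1 ∈ T
      · -- there is a (unique) element of rank i in D
        have hiD : i ∈ D.image ρ := by
          rw [himD]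
          exact Finset.mem_image.2 ⟨i + 1, hT1, sig_succ i⟩
        obtain ⟨t, htD, htρ⟩ := Finset.mem_image.1 hiD
        set t' : R' := e (Sum.inr ⟨t, htρ⟩) with ht'
        have hchins : ∀ E : Finset R, E ⊆ D → IsChain (· ≤ ·)
            ((insert t' (E.image g) : Finset R') : Set R') := by
          intro E hED
          rw [Finset.coe_insert, Finset.coe_image]
          refine IsChain.insert (hchD.mono (by exact_mod_cast hED) |>.image_of_map_rel _ _ g
            (fun x y h => (hle₁ x y).2 h)) ?_
          rintro b ⟨a, ha, rfl⟩ hne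
          by_cases hat : a = t
          · subst hat
            exact Or.inr ((hle₂ a ⟨a, htρ⟩).2 le_rfl)
          · rcases hchD (Finset.mem_coe.2 (hED ha)) (Finset.mem_coe.2 htD) hat with h | h
            · exact Or.inr ((hle₂ a ⟨t, htρ⟩).2 h)
            · exact Or.inl ((hle₃ ⟨t, htρ⟩ a).2 (lt_of_le_of_ne h (Ne.symm hat)))
        have himgins : ∀ E : Finset R,
            (insert t' (E.image g)).image ρ' = insert (i + 1) (E.image (fun a => ρ' (g a))) := by
          intro E
          rw [Finset.image_insert, Finset.image_image]
          congr 1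
          rw [ht', hρ'₂]
        by_cases hTi : i ∈ T
        · refine ⟨insert t' (D.image g), ⟨hchins D le_rfl, ?_⟩, ?_⟩
          · rw [himgins]
            have : D.image (fun a => ρ' (g a)) = (D.image ρ).image
                (fun j => if j ≤ i then j else j + 1) := by
              rw [Finset.image_image]
              exact Finset.image_congr (fun a _ => hglρ a)
            rw [this, himD, Finset.image_image]
            ext j
            simp only [Finset.mem_insert, Finset.mem_image, Function.comp_apply]
            constructor
            · rintro (rfl | ⟨k, hk, rfl⟩)
              · exact hT1
              · by_cases hki : k = i + 1
                · subst hki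
                  rw [sig_succ]
                  simpa using hTi
                · rwa [hsu k hki]
            · intro hj
              by_cases hji : j = i + 1
              · exact Or.inl hji
              · exact Or.inr ⟨j, hj, hsu j hji⟩
          · show (insert t' (D.image g)).image f = D
            rw [Finset.image_insert, himfg D, ht', hfr]
            exact Finset.insert_eq_self.2 htD
        · -- i ∉ T
          have htu : ∀ y ∈ D, ρ y = i → y = t := fun y hy hyr =>
            huniqR D hchD y hy t htD (by rw [hyr, htρ])
          have herase : (D.erase t).image ρ = (T.erase (i + 1)).image (sig i) := by
            ext j
            simp only [Finset.mem_image, Finset.mem_erase]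
            constructor
            · rintro ⟨y, ⟨hyt, hyD⟩, rfl⟩
              have hjmem : ρ y ∈ T.image (sig i) := by
                rw [← himD]; exact Finset.mem_image_of_mem ρ hyD
              obtain ⟨k, hk, hks⟩ := Finset.mem_image.1 hjmem
              have hki : k ≠ i + 1 := by
                intro h
                subst h
                rw [sig_succ] at hks
                exact hyt (htu y hyD hks.symm)
              exact ⟨k, ⟨hki, hk⟩, hks⟩
            · rintro ⟨k, ⟨hki, hk⟩, rfl⟩
              have hjmem : sig i k ∈ D.image ρ := by
                rw [himD]; exact Finset.mem_image_of_mem _ hk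
              obtain ⟨y, hy, hys⟩ := Finset.mem_image.1 hjmem
              have hyt : y ≠ t := by
                intro h
                subst h
                rw [htρ] at hys
                have : sig i k = sig i i := by rw [← hys, sig_self]
                rcases sig_eq_iff this with h1 | ⟨h1, h2⟩ | ⟨h1, h2⟩
                · exact hTi (h1 ▸ hk)
                · exact hTi (h1 ▸ hk)
                · exact hki h1
              exact ⟨y, ⟨hyt, hy⟩, hys⟩
          refine ⟨insert t' ((D.erase t).image g),
            ⟨hchins (D.erase t) (Finset.erase_subset t D), ?_⟩, ?_⟩
          · rw [himgins]
            have : (D.erase t).image (fun a => ρ' (g a)) = ((D.erase t).image ρ).image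
                (fun j => if j ≤ i then j else j + 1) := by
              rw [Finset.image_image]
              exact Finset.image_congr (fun a _ => hglρ a)
            rw [this, herase, himsu (T.erase (i + 1)) (by simp),
              Finset.insert_erase hT1]
          · show (insert t' ((D.erase t).image g)).image f = D
            rw [Finset.image_insert, himfg (D.erase t), ht', hfr]
            exact Finset.insert_erase htD
      · -- i + 1 ∉ T : no new elements needed
        refine ⟨D.image g, ⟨?_, ?_⟩, ?_⟩
        · rw [Finset.coe_image]
          exact hchD.image_of_map_rel _ _ g (fun x y h => (hle₁ x y).2 h)
        · rw [Finset.image_image]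
          have : D.image (fun a => ρ' (g a)) = (D.image ρ).image
              (fun j => if j ≤ i then j else j + 1) := by
            rw [Finset.image_image]
            exact Finset.image_congr (fun a _ => hglρ a)
          show D.image (fun a => ρ' (g a)) = T
          rw [this, himD, himsu T hT1]
        · exact himfg D
  show flagF R' ρ' T = flagF R ρ (T.image (sig i))
  unfold flagF
  rw [← hbij.image_eq, Set.ncard_image_of_injOn hbij.injOn]

end Stmt18Aux

/-- Let `R` be a finite graded poset of rank `n` with `0̂` and `1̂`, let
`1 ≤ i ≤ n-1`, and let `R'` (with rank function `ρ'`) be the stretching `R[i]` of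
`R` at rank `i`: for each `t` of rank `i` a new element `t'` is adjoined with
`t' > t` and `t' < u` whenever `t < u`, and with no other new relations (the order
on `R'` is pinned down by the four `↔` hypotheses below, through the bijection `e`
between `R ⊕ {t // ρ t = i}` and `R'`); new elements get rank `i+1` and old
elements of rank `> i` are shifted up by one.  Then
`β_{R[i]}(S) = β_R(S°)` if not both `i, i+1 ∈ S`, and `β_{R[i]}(S) = -β_R(S°)` if
both `i, i+1 ∈ S`.  Consequently, if `β_R` is multiplicity-free then so is
`β_{R[i]}`. -/
theorem stmt18 (R : Type*) [Fintype R] [PartialOrder R] [BoundedOrder R]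
    (n : ℕ) (ρ : R → ℕ) (hbot : ρ ⊥ = 0) (htop : ρ ⊤ = n)
    (hcov : ∀ a b : R, a ⋖ b → ρ b = ρ a + 1)
    (i : ℕ) (hi1 : 1 ≤ i) (hi2 : i ≤ n - 1)
    (R' : Type*) [PartialOrder R'] (ρ' : R' → ℕ)
    (e : R ⊕ {t : R // ρ t = i} ≃ R')
    (hle₁ : ∀ a b : R, e (Sum.inl a) ≤ e (Sum.inl b) ↔ a ≤ b)
    (hle₂ : ∀ (a : R) (t : {t : R // ρ t = i}),
      e (Sum.inl a) ≤ e (Sum.inr t) ↔ a ≤ t.1)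
    (hle₃ : ∀ (t : {t : R // ρ t = i}) (a : R),
      e (Sum.inr t) ≤ e (Sum.inl a) ↔ t.1 < a)
    (hle₄ : ∀ t s : {t : R // ρ t = i}, e (Sum.inr t) ≤ e (Sum.inr s) ↔ t = s)
    (hρ'₁ : ∀ a : R, ρ' (e (Sum.inl a)) = if ρ a ≤ i then ρ a else ρ a + 1)
    (hρ'₂ : ∀ t : {t : R // ρ t = i}, ρ' (e (Sum.inr t)) = i + 1) :
    (∀ S ⊆ Finset.Icc 1 n,
      flagH R' ρ' S =
        (if i ∈ S ∧ i + 1 ∈ S then -1 else 1) * flagH R ρ (contractAt i S)) ∧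
    ((∀ S ⊆ Finset.Icc 1 (n - 1), flagH R ρ S = 0 ∨ flagH R ρ S = 1 ∨
        flagH R ρ S = -1) →
      ∀ S ⊆ Finset.Icc 1 n, flagH R' ρ' S = 0 ∨ flagH R' ρ' S = 1 ∨
        flagH R' ρ' S = -1) := by
  classical
  have hmono := Stmt18Aux.mono_of_cov R ρ hcov
  have hA : ∀ T : Finset ℕ, flagF R' ρ' T = flagF R ρ (contractAt i T) :=
    Stmt18Aux.flagF_stretch R ρ hmono i R' ρ' e hle₁ hle₂ hle₃ hle₄ hρ'₁ hρ'₂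
  have part1 : ∀ S : Finset ℕ,
      flagH R' ρ' S =
        (if i ∈ S ∧ i + 1 ∈ S then -1 else 1) * flagH R ρ (contractAt i S) := by
    intro S
    have hstep : flagH R' ρ' S =
        ∑ T ∈ S.powerset, (-1 : ℤ) ^ (S.card - T.card)
          * (flagF R ρ (T.image (Stmt18Aux.sig i)) : ℤ) := by
      unfold flagH
      refine Finset.sum_congr rfl fun T _ => ?_
      rw [hA T, Stmt18Aux.contract_eq_image]
    rw [Stmt18Aux.contract_eq_image]
    by_cases hb : i ∈ S ∧ i + 1 ∈ S
    · rw [if_pos hb, hstep,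
        Stmt18Aux.sum_contract_both (fun T => (flagF R ρ T : ℤ)) i S hb.1 hb.2]
      unfold flagH; ring
    · rw [if_neg hb, hstep,
        Stmt18Aux.sum_contract_not_both (fun T => (flagF R ρ T : ℤ)) i S hb]
      unfold flagH; ring
  refine ⟨fun S _ => part1 S, ?_⟩
  intro hfree S hS
  have hsub : contractAt i S ⊆ Finset.Icc 1 (n - 1) := by
    rw [Stmt18Aux.contract_eq_image]
    intro j hj
    obtain ⟨k, hk, rfl⟩ := Finset.mem_image.1 hj
    have := Finset.mem_Icc.1 (hS hk)
    rw [Finset.mem_Icc]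
    unfold Stmt18Aux.sig; split_ifs <;> omega
  have h1 := part1 S
  rcases hfree _ hsub with h | h | h <;> rw [h] at h1 <;>
    split_ifs at h1 <;> simp [h1]
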